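/- Let n, d be positive integers and |k| a positive even integer. Then ∫_{ℝ^{nd}} e^{−½ Σ_{j=1}^d Σ_{m=1}^n v_{mj}²} |Σ_{m=1}^d Σ_{j=1}^n v_{jm}²|^{n|k|/2} dv ≤ C_{d,|k|}^n (n!)^{|k|} for some constant C_{d,|k|} > 0 depending only on d and |k|. -/

import Mathlib

open MeasureTheory

lemma aux_pow_le (M : ℕ) {x : ℝ} (hx : 0 ≤ x) :
    x ^ M ≤ (4 * (M:ℝ)) ^ M * Real.exp (x / 4) := by
  have h1 : (x/4) ^ M / M.factorial ≤ Real.exp (x/4) :=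
    Real.pow_div_factorial_le_exp _ (by positivity) M
  have h2 : ((M.factorial : ℝ)) ≤ (M:ℝ) ^ M := by exact_mod_cast Nat.factorial_le_pow M
  have hf : (0:ℝ) < M.factorial := by exact_mod_cast M.factorial_pos
  rw [div_le_iff₀ hf] at h1
  have h3 : (x/4) ^ M ≤ (M:ℝ) ^ M * Real.exp (x/4) := by
    calc (x/4) ^ M ≤ Real.exp (x/4) * M.factorial := h1
    _ ≤ Real.exp (x/4) * (M:ℝ) ^ M := by gcongr
    _ = _ := mul_comm _ _
  calc x ^ M = 4 ^ M * (x/4) ^ M := by rw [← mul_pow]; congr 1; ring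
  _ ≤ 4 ^ M * ((M:ℝ) ^ M * Real.exp (x/4)) := by gcongr
  _ = (4 * (M:ℝ)) ^ M * Real.exp (x/4) := by rw [mul_pow]; ring

lemma aux_ptwise (M : ℕ) {x : ℝ} (hx : 0 ≤ x) :
    Real.exp (-x/2) * x ^ M ≤ (4 * (M:ℝ)) ^ M * Real.exp (-(x/4)) := by
  calc Real.exp (-x/2) * x ^ M
      ≤ Real.exp (-x/2) * ((4 * (M:ℝ)) ^ M * Real.exp (x/4)) := by
        gcongr; exact aux_pow_le M hx
    _ = (4 * (M:ℝ)) ^ M * (Real.exp (-x/2) * Real.exp (x/4)) := by ring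
    _ = (4 * (M:ℝ)) ^ M * Real.exp (-(x/4)) := by
        rw [← Real.exp_add]; congr 1; ring

lemma aux_nn_fact (n : ℕ) : (n:ℝ) ^ n ≤ 3 ^ n * n.factorial := by
  have h1 : (n:ℝ) ^ n / n.factorial ≤ Real.exp n :=
    Real.pow_div_factorial_le_exp _ n.cast_nonneg n
  have hf : (0:ℝ) < n.factorial := by exact_mod_cast n.factorial_pos
  have h2 : Real.exp (n:ℝ) ≤ 3 ^ n := by
    have h : Real.exp (n:ℝ) = Real.exp 1 ^ n := by
      rw [← Real.exp_nat_mul]; norm_num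
    rw [h]
    exact pow_le_pow_left₀ (Real.exp_pos 1).le
      (le_trans Real.exp_one_lt_d9.le (by norm_num)) n
  rw [div_le_iff₀ hf] at h1
  calc (n:ℝ) ^ n ≤ Real.exp n * n.factorial := h1
  _ ≤ 3 ^ n * n.factorial := by gcongr

theorem stmt17 (d k : ℕ) (hd : 0 < d) (hk : 0 < k) (hke : Even k) :
    ∃ C > 0, ∀ n : ℕ, 0 < n →
      (∫ v : Fin n × Fin d → ℝ,
          Real.exp (-(∑ p, (v p) ^ 2) / 2) * (∑ p, (v p) ^ 2) ^ (n * k / 2)) ≤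
        C ^ n * (Nat.factorial n : ℝ) ^ k := by
  obtain ⟨K, hK⟩ := hke
  have hKk : k = 2 * K := by omega
  have hK0 : 0 < K := by omega
  refine ⟨(4:ℝ) ^ d * (12 * (K:ℝ)) ^ K, by positivity, fun n hn => ?_⟩
  set M : ℕ := n * K with hM
  have hnk : n * k = 2 * (n * K) := by rw [hKk]; ring
  have hMdef : n * k / 2 = M := by omega
  rw [hMdef]
  -- pointwise domination
  set g : (Fin n × Fin d → ℝ) → ℝ :=
    fun v => (4 * (M:ℝ)) ^ M * ∏ p, Real.exp (-(1/4) * (v p) ^ 2) with hg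
  have hgint : Integrable g := by
    refine Integrable.const_mul ?_ _
    exact Integrable.fintype_prod (f := fun (_ : Fin n × Fin d) (t : ℝ) =>
      Real.exp (-(1/4) * t ^ 2)) (fun _ => integrable_exp_neg_mul_sq (by norm_num))
  have hle : (fun v : Fin n × Fin d → ℝ =>
      Real.exp (-(∑ p, (v p) ^ 2) / 2) * (∑ p, (v p) ^ 2) ^ M) ≤ g := by
    intro v
    have hx : (0:ℝ) ≤ ∑ p, (v p) ^ 2 := Finset.sum_nonneg fun p _ => sq_nonneg _
    have hprod : ∏ p, Real.exp (-(1/4) * (v p) ^ 2)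
        = Real.exp (-((∑ p, (v p) ^ 2) / 4)) := by
      rw [← Real.exp_sum]
      congr 1
      simp only [neg_mul, Finset.sum_neg_distrib, ← Finset.mul_sum]
      ring
    simp only [hg]
    rw [hprod]
    exact aux_ptwise M hx
  have hnonneg : ∀ v : Fin n × Fin d → ℝ,
      (0:ℝ) ≤ Real.exp (-(∑ p, (v p) ^ 2) / 2) * (∑ p, (v p) ^ 2) ^ M := by
    intro v
    have hx : (0:ℝ) ≤ ∑ p, (v p) ^ 2 := Finset.sum_nonneg fun p _ => sq_nonneg _
    positivity
  have hint_le : (∫ v : Fin n × Fin d → ℝ,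
      Real.exp (-(∑ p, (v p) ^ 2) / 2) * (∑ p, (v p) ^ 2) ^ M) ≤ ∫ v, g v :=
    integral_mono_of_nonneg (Filter.Eventually.of_forall hnonneg) hgint
      (Filter.Eventually.of_forall hle)
  have hgval : (∫ v, g v) = (4 * (M:ℝ)) ^ M *
      (∫ t : ℝ, Real.exp (-(1/4) * t ^ 2)) ^ (n * d) := by
    simp only [hg]
    rw [integral_const_mul, volume_pi, integral_fintype_prod_eq_pow
      (ι := Fin n × Fin d) (fun t : ℝ => Real.exp (-(1/4) * t ^ 2))]
    simp [Fintype.card_prod]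
  have hone : (∫ t : ℝ, Real.exp (-(1/4) * t ^ 2)) ≤ 4 := by
    rw [integral_gaussian, show Real.pi / (1/4) = 4 * Real.pi by ring]
    have h16 : (4:ℝ) * Real.pi ≤ 16 := by nlinarith [Real.pi_le_four]
    calc Real.sqrt (4 * Real.pi) ≤ Real.sqrt 16 := Real.sqrt_le_sqrt h16
    _ = 4 := by
      rw [show (16:ℝ) = 4 ^ 2 by norm_num, Real.sqrt_sq]; norm_num
  have honepos : (0:ℝ) ≤ ∫ t : ℝ, Real.exp (-(1/4) * t ^ 2) :=
    integral_nonneg fun t => (Real.exp_pos _).le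
  -- numeric estimate
  have hnum : (4 * (M:ℝ)) ^ M * 4 ^ (n * d) ≤
      ((4:ℝ) ^ d * (12 * (K:ℝ)) ^ K) ^ n * (n.factorial : ℝ) ^ k := by
    have hb : (4:ℝ) * (M:ℝ) = (4 * (K:ℝ)) * (n:ℝ) := by rw [hM]; push_cast; ring
    have h1 : (4 * (M:ℝ)) ^ M = (4 * (K:ℝ)) ^ M * (n:ℝ) ^ M := by rw [hb, mul_pow]
    have h2 : (n:ℝ) ^ M ≤ 3 ^ M * (n.factorial : ℝ) ^ K := by
      rw [hM, pow_mul, pow_mul, ← mul_pow]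
      exact pow_le_pow_left₀ (by positivity) (aux_nn_fact n) K
    have hfact1 : (1:ℝ) ≤ (n.factorial : ℝ) := by exact_mod_cast n.factorial_pos
    have h3 : (n.factorial : ℝ) ^ K ≤ (n.factorial : ℝ) ^ k :=
      pow_le_pow_right₀ hfact1 (by omega)
    have h12 : (12 * (K:ℝ)) ^ M = (4 * (K:ℝ)) ^ M * 3 ^ M := by
      rw [← mul_pow]; ring_nf
    calc (4 * (M:ℝ)) ^ M * 4 ^ (n * d)
        = (4 * (K:ℝ)) ^ M * (n:ℝ) ^ M * 4 ^ (n * d) := by rw [h1]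
      _ ≤ (4 * (K:ℝ)) ^ M * (3 ^ M * (n.factorial : ℝ) ^ K) * 4 ^ (n * d) := by
          gcongr
      _ = (12 * (K:ℝ)) ^ M * 4 ^ (n * d) * (n.factorial : ℝ) ^ K := by
          rw [h12]; ring
      _ ≤ (12 * (K:ℝ)) ^ M * 4 ^ (n * d) * (n.factorial : ℝ) ^ k := by
          gcongr
      _ = ((4:ℝ) ^ d * (12 * (K:ℝ)) ^ K) ^ n * (n.factorial : ℝ) ^ k := by
          rw [hM, mul_comm n K, pow_mul, mul_comm n d, pow_mul, ← mul_pow]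
          ring_nf
  calc (∫ v : Fin n × Fin d → ℝ,
        Real.exp (-(∑ p, (v p) ^ 2) / 2) * (∑ p, (v p) ^ 2) ^ M) ≤ ∫ v, g v := hint_le
    _ = (4 * (M:ℝ)) ^ M * (∫ t : ℝ, Real.exp (-(1/4) * t ^ 2)) ^ (n * d) := hgval
    _ ≤ (4 * (M:ℝ)) ^ M * 4 ^ (n * d) := by gcongr <;> positivity
    _ ≤ _ := hnum
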